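/- With V as in the previous statement (η < τ < η + ζ, ζ > 0), every absolutely continuous solution x(t) of ẋ(t) ∈ V(x(t)) with x(0) ∈ [η, η + ζ] satisfies: if x(0) < τ then x is nondecreasing until it reaches [τ, η+ζ]; if x(0) > τ then x is nonincreasing until it reaches [η, τ]; and x(t) → τ as t → ∞. In particular τ is attractive on [η, η+ζ]. -/

import Mathlib

open MeasureTheory

/-- If `c ≤ f'` a.e. on `[s,t]` then `f s + c*(t-s) ≤ f t`. -/
private lemma nce_grow (f f' : ℝ → ℝ)
    (hInt : ∀ s t : ℝ, IntervalIntegrable f' volume s t)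
    (hAC : ∀ t : ℝ, 0 ≤ t → f t = f 0 + ∫ u in (0:ℝ)..t, f' u)
    {s t c : ℝ} (hs : 0 ≤ s) (hst : s ≤ t)
    (h : ∀ᵐ u ∂(volume.restrict (Set.Icc s t)), c ≤ f' u) :
    f s + c * (t - s) ≤ f t := by
  have hsub : (∫ u in (0:ℝ)..t, f' u) - ∫ u in (0:ℝ)..s, f' u = ∫ u in s..t, f' u :=
    intervalIntegral.integral_interval_sub_left (hInt 0 t) (hInt 0 s)
  have hmono : ∫ u in s..t, (fun _ => c) u ≤ ∫ u in s..t, f' u :=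
    intervalIntegral.integral_mono_ae_restrict hst (intervalIntegrable_const) (hInt s t) h
  have hconst : ∫ u in s..t, (fun _ => c) u = (t - s) * c := by
    simp [intervalIntegral.integral_const, smul_eq_mul]
  rw [hAC t (hs.trans hst), hAC s hs]
  nlinarith [hmono, hconst, hsub]

private lemma nce_shrink (f f' : ℝ → ℝ)
    (hInt : ∀ s t : ℝ, IntervalIntegrable f' volume s t)
    (hAC : ∀ t : ℝ, 0 ≤ t → f t = f 0 + ∫ u in (0:ℝ)..t, f' u)
    {s t c : ℝ} (hs : 0 ≤ s) (hst : s ≤ t)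
    (h : ∀ᵐ u ∂(volume.restrict (Set.Icc s t)), f' u ≤ c) :
    f t ≤ f s + c * (t - s) := by
  have := nce_grow (fun u => -(f u)) (fun u => -(f' u))
    (fun a b => (hInt a b).neg)
    (fun u hu => by rw [intervalIntegral.integral_neg]; have := hAC u hu; linarith)
    (c := -c) hs hst (by filter_upwards [h] with u hu; simpa using hu)
  linarith

/-- Barrier lemma: if `f' ≤ 0` a.e. where `f > τ`, then once `f ≤ τ` it stays `≤ τ`. -/
private lemma nce_barrier (f f' : ℝ → ℝ) (τ : ℝ)
    (hInt : ∀ s t : ℝ, IntervalIntegrable f' volume s t)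
    (hAC : ∀ t : ℝ, 0 ≤ t → f t = f 0 + ∫ u in (0:ℝ)..t, f' u)
    (hcont : ContinuousOn f (Set.Ici 0))
    (hae : ∀ᵐ u ∂(volume.restrict (Set.Ici (0:ℝ))), τ < f u → f' u ≤ 0)
    {T t : ℝ} (hT : 0 ≤ T) (hfT : f T ≤ τ) (hTt : T ≤ t) : f t ≤ τ := by
  by_contra hgt
  push_neg at hgt
  set S : Set ℝ := Set.Icc T t ∩ f ⁻¹' (Set.Iic τ) with hS
  have hSne : S.Nonempty := ⟨T, ⟨le_refl T, hTt⟩, hfT⟩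
  have hSbdd : BddAbove S := BddAbove.mono (Set.inter_subset_left) bddAbove_Icc
  have hSclosed : IsClosed S :=
    ((hcont.mono (fun u hu => le_trans hT hu.1)).preimage_isClosed_of_isClosed
      isClosed_Icc isClosed_Iic)
  set s' : ℝ := sSup S with hs'
  have hs'mem : s' ∈ S := hSclosed.csSup_mem hSne hSbdd
  obtain ⟨⟨hTs', hs't⟩, hfs'⟩ := hs'mem
  have hs'lt : s' < t := lt_of_le_of_ne hs't (fun h => by
    rw [h] at hfs'; exact absurd hgt (not_lt.mpr hfs'))
  -- on (s', t], f > τ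
  have hhigh : ∀ u ∈ Set.Ioc s' t, τ < f u := by
    intro u hu
    by_contra hle
    push_neg at hle
    exact absurd (le_csSup hSbdd ⟨⟨le_trans hTs' hu.1.le, hu.2⟩, hle⟩) (not_le.mpr hu.1)
  -- for any s'' in (s', t], f t ≤ f s''
  have hstep : ∀ s'' ∈ Set.Ioc s' t, f t ≤ f s'' := by
    intro s'' hs''
    have h0s'' : (0:ℝ) ≤ s'' := le_trans hT (le_trans hTs' hs''.1.le)
    have hsub : Set.Icc s'' t ⊆ Set.Ici (0:ℝ) := fun u hu => le_trans h0s'' hu.1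
    have hae' : ∀ᵐ u ∂(volume.restrict (Set.Icc s'' t)), f' u ≤ 0 := by
      have h1 := ae_restrict_of_ae_restrict_of_subset hsub hae
      have h2 := ae_restrict_mem (μ := volume) (measurableSet_Icc (a := s'') (b := t))
      filter_upwards [h1, h2] with u hu hmem
      exact hu (hhigh u ⟨lt_of_lt_of_le hs''.1 hmem.1, hmem.2⟩)
    have := nce_shrink f f' hInt hAC h0s'' hs''.2 hae'
    linarith
  -- continuity at s' gives s'' ∈ (s', t] with f s'' < f t, contradiction
  have h0s' : (0:ℝ) ≤ s' := le_trans hT hTs'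
  have hcw : ContinuousWithinAt f (Set.Ioc s' t) s' :=
    (hcont s' h0s').mono (fun u hu => le_trans h0s' hu.1.le)
  have hev : ∀ᶠ u in nhdsWithin s' (Set.Ioc s' t), f u < f t := by
    have : Set.Iio (f t) ∈ nhds (f s') := Iio_mem_nhds (lt_of_le_of_lt hfs' hgt)
    exact hcw this
  have hne : (nhdsWithin s' (Set.Ioc s' t)).NeBot := by
    rw [← mem_closure_iff_nhdsWithin_neBot, closure_Ioc (ne_of_lt hs'lt)]
    exact ⟨le_refl s', hs'lt.le⟩
  obtain ⟨u, hu1, hu2⟩ := (hev.and self_mem_nhdsWithin).exists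
  exact absurd (hstep u hu2) (not_le.mpr hu1)

/-- Attractivity of a nonconformist-driven equilibrium: every absolutely
continuous solution of the inclusion starting in `[η, η+ζ]` is nondecreasing
while below `τ`, nonincreasing while above `τ`, and converges to `τ`. -/
theorem nonconformist_equilibrium_attractive
    (η ζ τ : ℝ) (hζ : 0 < ζ) (h1 : η < τ) (h2 : τ < η + ζ)
    (V : ℝ → Set ℝ)
    (hV : ∀ x : ℝ, V x =
      if x < τ then {η + ζ - x}
      else if x = τ then Set.Icc (η - τ) (η + ζ - τ)
      else {η - x})
    (x x' : ℝ → ℝ)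
    (hInt : ∀ t : ℝ, IntervalIntegrable x' volume 0 t)
    (hAC : ∀ t : ℝ, 0 ≤ t → x t = x 0 + ∫ s in (0:ℝ)..t, x' s)
    (hincl : ∀ᵐ t ∂(volume.restrict (Set.Ici (0:ℝ))), x' t ∈ V (x t))
    (hx0 : x 0 ∈ Set.Icc η (η + ζ)) :
    (x 0 < τ → ∀ s t : ℝ, 0 ≤ s → s ≤ t →
      (∀ u ∈ Set.Icc (0:ℝ) t, x u < τ) → x s ≤ x t) ∧
    (x 0 > τ → ∀ s t : ℝ, 0 ≤ s → s ≤ t →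
      (∀ u ∈ Set.Icc (0:ℝ) t, x u > τ) → x t ≤ x s) ∧
    Filter.Tendsto x Filter.atTop (nhds τ) := by
  have hInt' : ∀ s t : ℝ, IntervalIntegrable x' volume s t :=
    fun s t => (hInt s).symm.trans (hInt t)
  have ha : (0:ℝ) < η + ζ - τ := by linarith
  have hb : (0:ℝ) < τ - η := by linarith
  -- a.e. facts
  have hlow : ∀ᵐ u ∂(volume.restrict (Set.Ici (0:ℝ))), x u < τ → η + ζ - τ ≤ x' u := by
    filter_upwards [hincl] with u hu hlt
    rw [hV (x u), if_pos hlt] at hu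
    rw [Set.mem_singleton_iff] at hu
    linarith
  have hhigh : ∀ᵐ u ∂(volume.restrict (Set.Ici (0:ℝ))), τ < x u → x' u ≤ -(τ - η) := by
    filter_upwards [hincl] with u hu hlt
    rw [hV (x u), if_neg (not_lt.mpr hlt.le), if_neg (ne_of_gt hlt)] at hu
    rw [Set.mem_singleton_iff] at hu
    linarith
  -- continuity of x on [0, ∞)
  have hxc : ContinuousOn x (Set.Ici 0) := by
    have hF : Continuous fun t => x 0 + ∫ u in (0:ℝ)..t, x' u :=
      continuous_const.add (intervalIntegral.continuous_primitive hInt' 0)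
    exact hF.continuousOn.congr (fun t ht => hAC t ht)
  -- generic a.e.-transfer to an interval with a pointwise condition
  have htrans : ∀ s t c : ℝ, 0 ≤ s →
      (∀ u ∈ Set.Icc s t, x u < τ) →
      ∀ᵐ u ∂(volume.restrict (Set.Icc s t)), η + ζ - τ ≤ x' u := by
    intro s t c hs hall
    have hsub : Set.Icc s t ⊆ Set.Ici (0:ℝ) := fun u hu => le_trans hs hu.1
    filter_upwards [ae_restrict_of_ae_restrict_of_subset hsub hlow,
      ae_restrict_mem (μ := volume) (measurableSet_Icc (a := s) (b := t))] with u hu hmem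
    exact hu (hall u hmem)
  have htrans' : ∀ s t c : ℝ, 0 ≤ s →
      (∀ u ∈ Set.Icc s t, τ < x u) →
      ∀ᵐ u ∂(volume.restrict (Set.Icc s t)), x' u ≤ -(τ - η) := by
    intro s t c hs hall
    have hsub : Set.Icc s t ⊆ Set.Ici (0:ℝ) := fun u hu => le_trans hs hu.1
    filter_upwards [ae_restrict_of_ae_restrict_of_subset hsub hhigh,
      ae_restrict_mem (μ := volume) (measurableSet_Icc (a := s) (b := t))] with u hu hmem
    exact hu (hall u hmem)
  refine ⟨?_, ?_, ?_⟩
  · -- nondecreasing while below τ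
    intro _ s t hs hst hall
    have h := nce_grow x x' hInt' hAC hs hst
      (htrans s t 0 hs (fun u hu => hall u ⟨le_trans hs hu.1, hu.2⟩))
    nlinarith
  · -- nonincreasing while above τ
    intro _ s t hs hst hall
    have h := nce_shrink x x' hInt' hAC (c := 0) hs hst (by
      filter_upwards [htrans' s t 0 hs (fun u hu => hall u ⟨le_trans hs hu.1, hu.2⟩)] with u hu
      linarith)
    nlinarith
  · -- convergence to τ
    -- step 1: x reaches τ in finite time
    obtain ⟨T, hT0, hTτ⟩ : ∃ T : ℝ, 0 ≤ T ∧ x T = τ := by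
      by_contra hno
      push_neg at hno
      rcases lt_trichotomy (x 0) τ with hlt | heq | hgt
      · -- all values below τ, but x grows at rate ≥ a : contradiction
        have hbelow : ∀ u : ℝ, 0 ≤ u → x u < τ := by
          intro u hu
          rcases lt_or_ge (x u) τ with h | h
          · exact h
          · exfalso
            have hiv : Set.Icc (x 0) (x u) ⊆ x '' Set.Icc 0 u :=
              intermediate_value_Icc hu (hxc.mono (fun v hv => hv.1))
            obtain ⟨v, hv, hxv⟩ := hiv ⟨hlt.le, h⟩
            exact hno v hv.1 hxv
        set t₀ : ℝ := (τ - x 0) / (η + ζ - τ) with ht₀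
        have ht₀0 : 0 ≤ t₀ := div_nonneg (by linarith) ha.le
        have := nce_grow x x' hInt' hAC (le_refl 0) ht₀0
          (htrans 0 t₀ 0 (le_refl 0) (fun u hu => hbelow u hu.1))
        have hmul : (η + ζ - τ) * (t₀ - 0) = τ - x 0 := by
          rw [ht₀]; field_simp; ring
        have := hbelow t₀ ht₀0
        linarith
      · exact hno 0 (le_refl 0) heq
      · have habove : ∀ u : ℝ, 0 ≤ u → τ < x u := by
          intro u hu
          rcases lt_or_ge τ (x u) with h | h
          · exact h
          · exfalso
            have hiv : Set.Icc (x u) (x 0) ⊆ x '' Set.Icc 0 u :=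
              intermediate_value_Icc' hu (hxc.mono (fun v hv => hv.1))
            obtain ⟨v, hv, hxv⟩ := hiv ⟨h, hgt.le⟩
            exact hno v hv.1 hxv
        set t₀ : ℝ := (x 0 - τ) / (τ - η) with ht₀
        have ht₀0 : 0 ≤ t₀ := div_nonneg (by linarith) hb.le
        have := nce_shrink x x' hInt' hAC (le_refl 0) ht₀0
          (htrans' 0 t₀ 0 (le_refl 0) (fun u hu => habove u hu.1))
        have hmul : (τ - η) * (t₀ - 0) = x 0 - τ := by
          rw [ht₀]; field_simp; ring
        have := habove t₀ ht₀0
        linarith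
    -- step 2: x stays at τ forever after T
    have hstay : ∀ t : ℝ, T ≤ t → x t = τ := by
      intro t ht
      have hub : x t ≤ τ := by
        refine nce_barrier x x' τ hInt' hAC hxc ?_ hT0 hTτ.le ht
        filter_upwards [hhigh] with u hu hlt
        linarith [hu hlt]
      have hlb : τ ≤ x t := by
        have := nce_barrier (fun u => -(x u)) (fun u => -(x' u)) (-τ)
          (fun a b => (hInt' a b).neg)
          (fun u hu => by rw [intervalIntegral.integral_neg]; have := hAC u hu; linarith)
          hxc.neg
          (by filter_upwards [hlow] with u hu hlt
              have : x u < τ := by linarith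
              linarith [hu this])
          hT0 (by simp [hTτ]) ht
        simpa using this
      linarith
    -- conclude
    have hev : ∀ᶠ t in Filter.atTop, x t = τ := by
      filter_upwards [Filter.eventually_ge_atTop T] with t ht
      exact hstay t ht
    exact Filter.Tendsto.congr' (by filter_upwards [hev] with t ht; exact ht.symm)
      tendsto_const_nhds
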